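/- The square-root lower bound: for any probability measure P' with dP'/dμ = L' square-integrable, satisfying E_μ[L'] = 1, E_μ[(L'-L)²] ≤ δ and E_μ[L'Y] = E_μ[LY], one has E_μ[L'X] ≥ E_μ[LX] - sqrt(δ · det(Σ_μ(X,Y))/det(Σ_μ(Y))). -/

import Mathlib

open MeasureTheory Matrix

/-- The covariance of two real random variables under `μ`. -/
noncomputable def covar {Ω : Type*} [MeasurableSpace Ω] (μ : Measure Ω) (f g : Ω → ℝ) : ℝ :=
  ∫ ω, (f ω - ∫ x, f x ∂μ) * (g ω - ∫ x, g x ∂μ) ∂μ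

open scoped ENNReal

lemma covar_comm'' {Ω : Type*} [MeasurableSpace Ω] (μ : Measure Ω) (f g : Ω → ℝ) :
    covar μ f g = covar μ g f := by
  simp only [covar, mul_comm]

lemma mul_int2 {Ω : Type*} [MeasurableSpace Ω] {μ : Measure Ω} {f g : Ω → ℝ}
    (hf : MemLp f 2 μ) (hg : MemLp g 2 μ) :
    Integrable (fun ω => f ω * g ω) μ := by
  have hpqr : (1:ℝ≥0∞)/1 = 1/2 + 1/2 := by
    rw [ENNReal.div_add_div_same, one_div_one]; norm_num [ENNReal.div_self]
  have h : MemLp (g • f) 1 μ := hf.smul hg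
  have he : (g • f) = fun ω => f ω * g ω := by funext ω; simp [mul_comm]
  rw [he] at h
  exact memLp_one_iff_integrable.mp h

lemma cs2 {Ω : Type*} [MeasurableSpace Ω] {μ : Measure Ω} {f g : Ω → ℝ}
    (hf : MemLp f 2 μ) (hg : MemLp g 2 μ) :
    (∫ ω, f ω * g ω ∂μ)^2 ≤ (∫ ω, f ω^2 ∂μ) * (∫ ω, g ω^2 ∂μ) := by
  set F := hf.toLp f
  set G := hg.toLp g
  have hFf : F =ᵐ[μ] f := hf.coeFn_toLp
  have hGg : G =ᵐ[μ] g := hg.coeFn_toLp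
  have h1 : (inner ℝ F G : ℝ) = ∫ ω, f ω * g ω ∂μ := by
    rw [L2.inner_def]
    refine integral_congr_ae ?_
    filter_upwards [hFf, hGg] with ω h h'
    simp [h, h', RCLike.inner_apply, mul_comm]
  have h2 : (inner ℝ F F : ℝ) = ∫ ω, f ω^2 ∂μ := by
    rw [L2.inner_def]
    refine integral_congr_ae ?_
    filter_upwards [hFf] with ω h
    simp [h, RCLike.inner_apply, sq]
  have h3 : (inner ℝ G G : ℝ) = ∫ ω, g ω^2 ∂μ := by
    rw [L2.inner_def]
    refine integral_congr_ae ?_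
    filter_upwards [hGg] with ω h
    simp [h, RCLike.inner_apply, sq]
  have habs := abs_real_inner_le_norm F G
  have h4 : (inner ℝ F G : ℝ)^2 ≤ ‖F‖^2 * ‖G‖^2 := by
    rw [← mul_pow]
    calc (inner ℝ F G : ℝ)^2 = |(inner ℝ F G : ℝ)|^2 := (sq_abs _).symm
    _ ≤ (‖F‖ * ‖G‖)^2 := by
        apply pow_le_pow_left₀ (abs_nonneg _) habs
  calc (∫ ω, f ω * g ω ∂μ)^2 = (inner ℝ F G : ℝ)^2 := by rw [h1]
  _ ≤ ‖F‖^2 * ‖G‖^2 := h4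
  _ = (inner ℝ F F : ℝ) * (inner ℝ G G : ℝ) := by
      rw [real_inner_self_eq_norm_sq, real_inner_self_eq_norm_sq]
  _ = _ := by rw [h2, h3]

/-- The square-root lower bound: any density `L'` in the `δ`-neighborhood of `L`
preserving the mean of `Y` satisfies
`E_μ[L'X] ≥ E_μ[LX] - √(δ · det Σ_μ(X,Y) / det Σ_μ(Y))`. -/
theorem stmt6 {Ω : Type*} [MeasurableSpace Ω] (μ : Measure Ω) [IsProbabilityMeasure μ]
    (n : ℕ) (X : Ω → ℝ) (Y : Fin n → Ω → ℝ) (L : Ω → ℝ)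
    (hX : MemLp X 2 μ) (hY : ∀ i, MemLp (Y i) 2 μ)
    (hLnn : ∀ ω, 0 ≤ L ω) (hLmean : ∫ ω, L ω ∂μ = 1) (hL : MemLp L 2 μ)
    (SXY : Matrix (Fin (n + 1)) (Fin (n + 1)) ℝ)
    (hSXY : SXY = Matrix.of fun i j =>
      covar μ ((Fin.cons X Y : Fin (n+1) → Ω → ℝ) i) ((Fin.cons X Y : Fin (n+1) → Ω → ℝ) j))
    (SY : Matrix (Fin n) (Fin n) ℝ)
    (hSY : SY = Matrix.of fun i j => covar μ (Y i) (Y j))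
    (hinv : IsUnit SXY.det) (hinvY : IsUnit SY.det)
    (δ : ℝ) (hδ : 0 < δ)
    (L' : Ω → ℝ) (hL'nn : ∀ ω, 0 ≤ L' ω) (hL' : MemLp L' 2 μ)
    (hL'mean : ∫ ω, L' ω ∂μ = 1)
    (hdiv : ∫ ω, (L' ω - L ω) ^ 2 ∂μ ≤ δ)
    (hmom : ∀ i, ∫ ω, L' ω * Y i ω ∂μ = ∫ ω, L ω * Y i ω ∂μ) :
    ∫ ω, L ω * X ω ∂μ - Real.sqrt (δ * (SXY.det / SY.det)) ≤ ∫ ω, L' ω * X ω ∂μ := by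
  classical
  set mX : ℝ := ∫ ω, X ω ∂μ with hmX
  set mY : Fin n → ℝ := fun i => ∫ ω, Y i ω ∂μ with hmY
  set Xc : Ω → ℝ := fun ω => X ω - mX with hXcdef
  set Yc : Fin n → Ω → ℝ := fun i ω => Y i ω - mY i with hYcdef
  set g : Ω → ℝ := fun ω => L' ω - L ω with hgdef
  have hXc : MemLp Xc 2 μ := hX.sub (memLp_const mX)
  have hYc : ∀ i, MemLp (Yc i) 2 μ := fun i => (hY i).sub (memLp_const (mY i))
  have hg : MemLp g 2 μ := hL'.sub hL
  set c : Fin n → ℝ := fun i => covar μ X (Y i) with hcdef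
  set β : Fin n → ℝ := SY⁻¹.mulVec c with hβdef
  set R : Ω → ℝ := fun ω => Xc ω - ∑ i, β i * Yc i ω with hRdef
  have hSmem : MemLp (fun ω => ∑ i, β i * Yc i ω) 2 μ :=
    memLp_finset_sum Finset.univ (fun i _ => (hYc i).const_mul (β i))
  have hR : MemLp R 2 μ := hXc.sub hSmem
  -- basic integral facts
  have hgmean : ∫ ω, g ω ∂μ = 0 := by
    simp only [hgdef]
    rw [integral_sub (hL'.integrable one_le_two) (hL.integrable one_le_two), hL'mean, hLmean,
      sub_self]
  have hgY : ∀ i, ∫ ω, g ω * Y i ω ∂μ = 0 := by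
    intro i
    simp only [hgdef, sub_mul]
    rw [integral_sub (mul_int2 hL' (hY i)) (mul_int2 hL (hY i)), hmom i, sub_self]
  have hgYc : ∀ i, ∫ ω, g ω * Yc i ω ∂μ = 0 := by
    intro i
    simp only [hYcdef, mul_sub]
    rw [integral_sub (mul_int2 hg (hY i)) ((hg.integrable one_le_two).mul_const (mY i)),
      integral_mul_const, hgmean, zero_mul, sub_zero, hgY i]
  have hgX : ∫ ω, g ω * X ω ∂μ = (∫ ω, L' ω * X ω ∂μ) - ∫ ω, L ω * X ω ∂μ := by
    simp only [hgdef, sub_mul]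
    rw [integral_sub (mul_int2 hL' hX) (mul_int2 hL hX)]
  have hgXc : ∫ ω, g ω * Xc ω ∂μ = ∫ ω, g ω * X ω ∂μ := by
    simp only [hXcdef, mul_sub]
    rw [integral_sub (mul_int2 hg hX) ((hg.integrable one_le_two).mul_const mX),
      integral_mul_const, hgmean, zero_mul, sub_zero]
  have hgR : ∫ ω, g ω * R ω ∂μ = ∫ ω, g ω * X ω ∂μ := by
    have he : (fun ω => g ω * R ω) = fun ω => g ω * Xc ω - ∑ i, β i * (g ω * Yc i ω) := by
      funext ω
      simp only [hRdef, mul_sub, Finset.mul_sum]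
      congr 1
      exact Finset.sum_congr rfl fun i _ => by ring
    rw [he, integral_sub (mul_int2 hg hXc)
      (integrable_finset_sum _ fun i _ => (mul_int2 hg (hYc i)).const_mul (β i)),
      integral_finset_sum _ fun i _ => (mul_int2 hg (hYc i)).const_mul (β i)]
    rw [Finset.sum_eq_zero fun i _ => by rw [integral_const_mul, hgYc i, mul_zero], sub_zero, hgXc]
  -- second moments
  have hXX : ∫ ω, Xc ω * Xc ω ∂μ = covar μ X X := by
    simp only [covar, hXcdef, hmX]
  have hXYc : ∀ i, ∫ ω, Xc ω * Yc i ω ∂μ = c i := by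
    intro i
    simp only [hcdef, covar, hXcdef, hYcdef, hmX, hmY]
  have hYY : ∀ i j, ∫ ω, Yc i ω * Yc j ω ∂μ = SY i j := by
    intro i j
    simp only [hSY, Matrix.of_apply, covar, hYcdef, hmY]
  have hβi : ∀ i, β i = ∑ j, SY⁻¹ i j * c j := by
    intro i; simp [hβdef, Matrix.mulVec, dotProduct]
  have hSYβ : ∀ i, ∑ j, SY i j * β j = c i := by
    intro i
    have h1 : SY.mulVec β = c := by
      rw [hβdef, Matrix.mulVec_mulVec, Matrix.mul_nonsing_inv SY hinvY, Matrix.one_mulVec]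
    calc ∑ j, SY i j * β j = SY.mulVec β i := by simp [Matrix.mulVec, dotProduct]
    _ = c i := by rw [h1]
  set V : ℝ := covar μ X X with hVdef
  set q : ℝ := ∑ i, β i * c i with hqdef
  -- integral of R^2
  have hRsq : ∫ ω, R ω^2 ∂μ = V - q := by
    have he : (fun ω => R ω^2) = fun ω =>
        (Xc ω * Xc ω - ∑ i, (2 * β i) * (Xc ω * Yc i ω))
          + ∑ i, ∑ j, (β i * β j) * (Yc i ω * Yc j ω) := by
      funext ω
      simp only [hRdef]
      have h1 : (∑ i, β i * Yc i ω) * (∑ j, β j * Yc j ω)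
          = ∑ i, ∑ j, (β i * β j) * (Yc i ω * Yc j ω) := by
        rw [Finset.sum_mul_sum]
        exact Finset.sum_congr rfl fun i _ => Finset.sum_congr rfl fun j _ => by ring
      have h2 : Xc ω * (∑ i, β i * Yc i ω) * 2 = ∑ i, (2 * β i) * (Xc ω * Yc i ω) := by
        rw [mul_comm, mul_comm (Xc ω), Finset.sum_mul, Finset.mul_sum]
        exact Finset.sum_congr rfl fun i _ => by ring
      calc (Xc ω - ∑ i, β i * Yc i ω)^2
          = (Xc ω * Xc ω - Xc ω * (∑ i, β i * Yc i ω) * 2)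
            + (∑ i, β i * Yc i ω) * (∑ j, β j * Yc j ω) := by ring
      _ = _ := by rw [h1, h2]
    have hint1 : Integrable (fun ω => Xc ω * Xc ω) μ := mul_int2 hXc hXc
    have hint2 : Integrable (fun ω => ∑ i, (2 * β i) * (Xc ω * Yc i ω)) μ :=
      integrable_finset_sum _ fun i _ => (mul_int2 hXc (hYc i)).const_mul _
    have hint3 : Integrable (fun ω => ∑ i, ∑ j, (β i * β j) * (Yc i ω * Yc j ω)) μ :=
      integrable_finset_sum _ fun i _ =>
        integrable_finset_sum _ fun j _ => (mul_int2 (hYc i) (hYc j)).const_mul _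
    have hintsub : Integrable
        (fun ω => Xc ω * Xc ω - ∑ i, (2 * β i) * (Xc ω * Yc i ω)) μ := hint1.sub hint2
    rw [he, integral_add hintsub hint3, integral_sub hint1 hint2,
      integral_finset_sum _ fun i _ => (mul_int2 hXc (hYc i)).const_mul _,
      integral_finset_sum _ fun i _ =>
        integrable_finset_sum _ fun j _ => (mul_int2 (hYc i) (hYc j)).const_mul _]
    have e1 : ∀ i ∈ Finset.univ, ∫ ω, (2 * β i) * (Xc ω * Yc i ω) ∂μ = 2 * (β i * c i) := by
      intro i _; rw [integral_const_mul, hXYc i]; ring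
    have e2 : ∀ i ∈ Finset.univ,
        (∫ ω, ∑ j, (β i * β j) * (Yc i ω * Yc j ω) ∂μ) = β i * c i := by
      intro i _
      rw [integral_finset_sum _ fun j _ => (mul_int2 (hYc i) (hYc j)).const_mul _]
      have e3 : ∀ j ∈ Finset.univ,
          ∫ ω, (β i * β j) * (Yc i ω * Yc j ω) ∂μ = β i * (SY i j * β j) := by
        intro j _; rw [integral_const_mul, hYY i j]; ring
      rw [Finset.sum_congr rfl e3, ← Finset.mul_sum, hSYβ i]
    rw [Finset.sum_congr rfl e1, Finset.sum_congr rfl e2, hXX, ← Finset.mul_sum, ← hqdef]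
    ring
  -- determinant identity
  have hSYdet : SY.det ≠ 0 := by
    intro h; rw [h] at hinvY; exact (by simpa using hinvY : IsUnit (0:ℝ)).ne_zero rfl
  haveI : Invertible SY := SY.invertibleOfIsUnitDet hinvY
  have hcc : ∀ j, covar μ (Y j) X = c j := by
    intro j; rw [covar_comm'']
  let e : (Unit ⊕ Fin n) ≃ Fin (n+1) :=
    { toFun := Sum.elim (fun _ => 0) Fin.succ
      invFun := Fin.cases (Sum.inl ()) Sum.inr
      left_inv := by rintro (⟨⟩|i) <;> simp
      right_inv := by
        intro i
        induction i using Fin.cases <;> simp }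
  have hsub : SXY.submatrix e e = Matrix.fromBlocks
      (Matrix.of fun (_ : Unit) (_ : Unit) => V)
      (Matrix.of fun (_ : Unit) j => c j)
      (Matrix.of fun i (_ : Unit) => covar μ (Y i) X) SY := by
    ext i j
    cases i with
    | inl u =>
      cases j with
      | inl v => simp [hSXY, e, Matrix.fromBlocks, hVdef]
      | inr j => simp [hSXY, e, Matrix.fromBlocks, hcdef]
    | inr i =>
      cases j with
      | inl v => simp [hSXY, e, Matrix.fromBlocks]
      | inr j => simp [hSXY, hSY, e, Matrix.fromBlocks]
  have hdet : SXY.det = SY.det * (V - q) := by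
    have h1 : SXY.det = (SXY.submatrix e e).det := (Matrix.det_submatrix_equiv_self e SXY).symm
    rw [h1, hsub, Matrix.det_fromBlocks₂₂]
    congr 1
    rw [Matrix.det_unique]
    simp only [Matrix.sub_apply, Matrix.of_apply, Matrix.mul_apply, Matrix.invOf_eq_nonsing_inv]
    have hq2 : ∑ j, (∑ k, c k * SY⁻¹ k j) * covar μ (Y j) X = q := by
      rw [hqdef]
      rw [Finset.sum_congr rfl fun j _ => by rw [hcc j, Finset.sum_mul]]
      rw [Finset.sum_comm]
      refine Finset.sum_congr rfl fun k _ => ?_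
      rw [hβi k, Finset.sum_mul]
      exact Finset.sum_congr rfl fun j _ => by ring
    rw [hq2]
  -- final assembly
  have hs0 : 0 ≤ ∫ ω, R ω^2 ∂μ := integral_nonneg fun ω => sq_nonneg _
  have hg2le : ∫ ω, g ω^2 ∂μ ≤ δ := by simp only [hgdef]; exact hdiv
  have hcs := cs2 hg hR
  have hVq : V - q = SXY.det / SY.det := by
    rw [hdet]; field_simp
  have hbound : (∫ ω, g ω * R ω ∂μ)^2 ≤ δ * (SXY.det / SY.det) := by
    calc (∫ ω, g ω * R ω ∂μ)^2 ≤ (∫ ω, g ω^2 ∂μ) * (∫ ω, R ω^2 ∂μ) := hcs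
    _ ≤ δ * (∫ ω, R ω^2 ∂μ) := mul_le_mul_of_nonneg_right hg2le hs0
    _ = δ * (SXY.det / SY.det) := by rw [hRsq, hVq]
  have habs : |∫ ω, g ω * R ω ∂μ| ≤ Real.sqrt (δ * (SXY.det / SY.det)) :=
    Real.abs_le_sqrt hbound
  have hfinal : -(Real.sqrt (δ * (SXY.det / SY.det))) ≤ ∫ ω, g ω * R ω ∂μ := by
    have := neg_abs_le (∫ ω, g ω * R ω ∂μ)
    linarith
  rw [hgR, hgX] at hfinal
  linarith
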